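/- Let n ≥ 3 be an integer and let P be a type II_n polygon all of whose vertices belong to a sublattice Γ of ℤ² with invariant factor sequence (1, n). Then the large e₁-step of Γ and the large e₂-step of Γ (with respect to the standard basis (e₁, e₂) of ℤ²) are both greater than or equal to 2. -/

import Mathlib

open Set

/-- The point of `ℝ²` corresponding to an integer point. -/
def intPt (p : ℤ × ℤ) : ℝ × ℝ := ((p.1 : ℝ), (p.2 : ℝ))

/-- A convex integer polygon: the convex hull of a finite set of integer points,
with nonempty interior. -/
def IsConvexIntegerPolygon (P : Set (ℝ × ℝ)) : Prop :=
  ∃ V : Finset (ℤ × ℤ), P = convexHull ℝ (intPt '' ↑V) ∧ (interior P).Nonempty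

/-- A sublattice of `ℤ²`: a subgroup generated by two linearly independent vectors. -/
def IsSublatticeZ2 (Λ : AddSubgroup (ℤ × ℤ)) : Prop :=
  ∃ f g : ℤ × ℤ, f.1 * g.2 - f.2 * g.1 ≠ 0 ∧ Λ = AddSubgroup.closure {f, g}

/-- `Λ` has invariant factor sequence `(δ, n)`: it equals `A·ℤ²` for an integer matrix `A`
with nonzero determinant, where `δ` is the gcd of the four entries of `A` and
`n = |det A| / δ`. -/
def HasInvFactors (Λ : AddSubgroup (ℤ × ℤ)) (δ n : ℕ) : Prop :=
  ∃ a b c d : ℤ, a * d - b * c ≠ 0 ∧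
    (∀ p : ℤ × ℤ, p ∈ Λ ↔ ∃ u v : ℤ, p = (a * u + b * v, c * u + d * v)) ∧
    δ = Nat.gcd (Nat.gcd a.natAbs b.natAbs) (Nat.gcd c.natAbs d.natAbs) ∧
    n = (a * d - b * c).natAbs / δ

/-- All vertices (extreme points) of `P` belong to the lattice `Λ`. -/
def VerticesIn (P : Set (ℝ × ℝ)) (Λ : AddSubgroup (ℤ × ℤ)) : Prop :=
  ∀ x ∈ Set.extremePoints ℝ P, ∃ p ∈ Λ, x = intPt p

/-- `P` contains no point of the lattice `nℤ² = (nℤ) × (nℤ)`. -/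
def FreeOfLattice (n : ℕ) (P : Set (ℝ × ℝ)) : Prop :=
  ∀ u v : ℤ, intPt ((n : ℤ) * u, (n : ℤ) * v) ∉ P

/-- The segment `[p, q]`, lying on a line `L` through `p` and `q`, splits `P`:
`P ∩ L ⊆ [p, q]` and both open half-planes bounded by `L` contain points of `P`. -/
def SegSplits (P : Set (ℝ × ℝ)) (p q : ℝ × ℝ) : Prop :=
  ∃ a b c : ℝ, ¬(a = 0 ∧ b = 0) ∧
    a * p.1 + b * p.2 = c ∧ a * q.1 + b * q.2 = c ∧
    (∀ x ∈ P, a * x.1 + b * x.2 = c → x ∈ segment ℝ p q) ∧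
    (∃ x ∈ P, a * x.1 + b * x.2 < c) ∧ (∃ x ∈ P, c < a * x.1 + b * x.2)

/-- The vertical line `x₁ = c` splits `P`. -/
def VLineSplits (P : Set (ℝ × ℝ)) (c : ℝ) : Prop :=
  (∃ x ∈ P, x.1 < c) ∧ (∃ x ∈ P, c < x.1)

/-- The horizontal line `x₂ = c` splits `P`. -/
def HLineSplits (P : Set (ℝ × ℝ)) (c : ℝ) : Prop :=
  (∃ x ∈ P, x.2 < c) ∧ (∃ x ∈ P, c < x.2)

/-- Type II_n polygon: a convex integer polygon free of points of `nℤ²` such that each of the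
segments `[(0,0),(n,0)]`, `[(n,0),(n,n)]`, `[(0,n),(n,n)]`, `[(0,0),(0,n)]` splits it. -/
def TypeII (n : ℕ) (P : Set (ℝ × ℝ)) : Prop :=
  IsConvexIntegerPolygon P ∧ FreeOfLattice n P ∧
  SegSplits P (0, 0) ((n : ℝ), 0) ∧
  SegSplits P ((n : ℝ), 0) ((n : ℝ), (n : ℝ)) ∧
  SegSplits P (0, (n : ℝ)) ((n : ℝ), (n : ℝ)) ∧
  SegSplits P (0, 0) (0, (n : ℝ))

/-! ### Auxiliary lemmas -/

lemma seg_horiz {P : Set (ℝ × ℝ)} {N h : ℝ} (hN : 0 < N) (hs : SegSplits P (0, h) (N, h)) :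
    (∀ x ∈ P, x.2 = h → 0 ≤ x.1 ∧ x.1 ≤ N) ∧ (∃ x ∈ P, x.2 < h) ∧ (∃ x ∈ P, h < x.2) := by
  obtain ⟨a, b, c, hab, h1, h2, hline, ⟨x1, hx1P, hx1⟩, ⟨x2, hx2P, hx2⟩⟩ := hs
  simp only at h1 h2
  have ha : a = 0 := by
    have haN : a * N = 0 := by linarith
    rcases mul_eq_zero.1 haN with h' | h'
    · exact h'
    · exact absurd h' hN.ne'
  have hb : b ≠ 0 := fun hb0 => hab ⟨ha, hb0⟩
  have hc : c = b * h := by rw [ha] at h1; linarith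
  refine ⟨?_, ?_⟩
  · intro x hx hx2h
    have hxseg := hline x hx (by rw [ha, hc, hx2h]; ring)
    obtain ⟨ta, tb, hta, htb, htab, hxe⟩ := hxseg
    have hx1e : x.1 = tb * N := by
      have := congrArg Prod.fst hxe
      simp at this
      linarith [this]
    constructor
    · rw [hx1e]; exact mul_nonneg htb hN.le
    · rw [hx1e]; nlinarith
  · rw [ha, hc] at hx1 hx2
    simp only [zero_mul, zero_add] at hx1 hx2
    rcases hb.lt_or_gt with hbneg | hbpos
    · constructor
      · exact ⟨x2, hx2P, by nlinarith⟩
      · exact ⟨x1, hx1P, by nlinarith⟩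
    · constructor
      · exact ⟨x1, hx1P, by nlinarith⟩
      · exact ⟨x2, hx2P, by nlinarith⟩

lemma seg_vert {P : Set (ℝ × ℝ)} {N h : ℝ} (hN : 0 < N) (hs : SegSplits P (h, 0) (h, N)) :
    (∀ x ∈ P, x.1 = h → 0 ≤ x.2 ∧ x.2 ≤ N) ∧ (∃ x ∈ P, x.1 < h) ∧ (∃ x ∈ P, h < x.1) := by
  obtain ⟨a, b, c, hab, h1, h2, hline, ⟨x1, hx1P, hx1⟩, ⟨x2, hx2P, hx2⟩⟩ := hs
  simp only at h1 h2
  have hbz : b = 0 := by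
    have hbN : b * N = 0 := by linarith
    rcases mul_eq_zero.1 hbN with h' | h'
    · exact h'
    · exact absurd h' hN.ne'
  have ha : a ≠ 0 := fun ha0 => hab ⟨ha0, hbz⟩
  have hc : c = a * h := by rw [hbz] at h1; linarith
  refine ⟨?_, ?_⟩
  · intro x hx hx1h
    have hxseg := hline x hx (by rw [hbz, hc, hx1h]; ring)
    obtain ⟨ta, tb, hta, htb, htab, hxe⟩ := hxseg
    have hx2e : x.2 = tb * N := by
      have := congrArg Prod.snd hxe
      simp at this
      linarith [this]
    constructor
    · rw [hx2e]; exact mul_nonneg htb hN.le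
    · rw [hx2e]; nlinarith
  · rw [hbz, hc] at hx1 hx2
    simp only [zero_mul, add_zero] at hx1 hx2
    rcases ha.lt_or_gt with haneg | hapos
    · constructor
      · exact ⟨x2, hx2P, by nlinarith⟩
      · exact ⟨x1, hx1P, by nlinarith⟩
    · constructor
      · exact ⟨x1, hx1P, by nlinarith⟩
      · exact ⟨x2, hx2P, by nlinarith⟩

lemma cross_snd {P : Set (ℝ × ℝ)} (hconv : Convex ℝ P) {x y : ℝ × ℝ} (hx : x ∈ P) (hy : y ∈ P)
    {h : ℝ} (h1 : x.2 ≤ h) (h2 : h ≤ y.2) (h3 : x.2 < y.2) :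
    ∃ t : ℝ, 0 ≤ t ∧ t ≤ 1 ∧ ((1 - t) * x.1 + t * y.1, h) ∈ P := by
  have hd : 0 < y.2 - x.2 := by linarith
  set t := (h - x.2) / (y.2 - x.2) with ht
  have ht0 : 0 ≤ t := div_nonneg (by linarith) hd.le
  have ht1 : t ≤ 1 := (div_le_one hd).2 (by linarith)
  have hts : t * (y.2 - x.2) = h - x.2 := div_mul_cancel₀ _ hd.ne'
  refine ⟨t, ht0, ht1, ?_⟩
  have hmem := hconv hx hy (by linarith : (0:ℝ) ≤ 1 - t) ht0 (by ring)
  have heq : ((1 - t) * x.1 + t * y.1, h) = (1 - t) • x + t • y := by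
    apply Prod.ext <;> simp [Prod.smul_fst, Prod.smul_snd] <;> nlinarith
  rw [heq]; exact hmem

lemma cross_fst {P : Set (ℝ × ℝ)} (hconv : Convex ℝ P) {x y : ℝ × ℝ} (hx : x ∈ P) (hy : y ∈ P)
    {h : ℝ} (h1 : x.1 ≤ h) (h2 : h ≤ y.1) (h3 : x.1 < y.1) :
    ∃ t : ℝ, 0 ≤ t ∧ t ≤ 1 ∧ (h, (1 - t) * x.2 + t * y.2) ∈ P := by
  have hd : 0 < y.1 - x.1 := by linarith
  set t := (h - x.1) / (y.1 - x.1) with ht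
  have ht0 : 0 ≤ t := div_nonneg (by linarith) hd.le
  have ht1 : t ≤ 1 := (div_le_one hd).2 (by linarith)
  have hts : t * (y.1 - x.1) = h - x.1 := div_mul_cancel₀ _ hd.ne'
  refine ⟨t, ht0, ht1, ?_⟩
  have hmem := hconv hx hy (by linarith : (0:ℝ) ≤ 1 - t) ht0 (by ring)
  have heq : (h, (1 - t) * x.2 + t * y.2) = (1 - t) • x + t • y := by
    apply Prod.ext <;> simp [Prod.smul_fst, Prod.smul_snd] <;> nlinarith
  rw [heq]; exact hmem

lemma exists_extreme_lt {P : Set (ℝ × ℝ)} (hcomp : IsCompact P) (hconv : Convex ℝ P)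
    (f : ℝ × ℝ → ℝ) (hf : ∀ (a b : ℝ) (x y : ℝ × ℝ), f (a • x + b • y) = a * f x + b * f y)
    (hfc : Continuous f) {r : ℝ} (hex : ∃ x ∈ P, f x < r) :
    ∃ e ∈ extremePoints ℝ P, f e < r := by
  by_contra hcon
  push_neg at hcon
  obtain ⟨x, hxP, hxr⟩ := hex
  have hKM := closure_convexHull_extremePoints hcomp hconv
  have hsub : P ⊆ {z : ℝ × ℝ | r ≤ f z} := by
    rw [← hKM]
    refine closure_minimal (convexHull_min (fun e he => hcon e he) ?_)
      (isClosed_le continuous_const hfc)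
    intro u hu v hv a b ha hb hab
    simp only [Set.mem_setOf_eq] at *
    rw [hf]
    have hr : a * r + b * r = r := by rw [← add_mul, hab, one_mul]
    have h1 := mul_le_mul_of_nonneg_left hu ha
    have h2 := mul_le_mul_of_nonneg_left hv hb
    linarith
  exact absurd (hsub hxP) (by simpa using hxr.not_ge)

set_option maxHeartbeats 2000000 in
lemma core_snd (n : ℕ) (hn : 3 ≤ n) (P : Set (ℝ × ℝ)) (hP : TypeII n P)
    (hv : ∀ x ∈ extremePoints ℝ P, ∃ p : ℤ × ℤ, (n : ℤ) ∣ p.2 ∧ x = intPt p) : False := by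
  obtain ⟨⟨V, hPV, -⟩, hfree, hs1, hs2, hs3, hs4⟩ := hP
  have hnz : (3:ℤ) ≤ (n:ℤ) := by exact_mod_cast hn
  have hN : (0:ℝ) < (n:ℝ) := by
    have : 0 < n := by omega
    exact_mod_cast this
  have hconv : Convex ℝ P := hPV ▸ convex_convexHull ℝ _
  have hcomp : IsCompact P := by
    rw [hPV]; exact (Set.Finite.image _ V.finite_toSet).isCompact_convexHull ℝ
  obtain ⟨hA, hbel0, -⟩ := seg_horiz hN hs1
  obtain ⟨hB, -, habN⟩ := seg_horiz hN hs3
  obtain ⟨hC, hleft, -⟩ := seg_vert hN hs4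
  have hextP : extremePoints ℝ P ⊆ P := extremePoints_subset
  obtain ⟨ea, heaE, hea1⟩ := exists_extreme_lt hcomp hconv (fun x => x.1)
    (by intro a b x y; simp) continuous_fst hleft
  obtain ⟨pa, hpaD, hpaEq⟩ := hv ea heaE
  obtain ⟨eu, heuE, heu2⟩ := exists_extreme_lt hcomp hconv (fun x => x.2)
    (by intro a b x y; simp) continuous_snd hbel0
  obtain ⟨pu, hpuD, hpuEq⟩ := hv eu heuE
  obtain ⟨ew, hewE, hew2'⟩ := exists_extreme_lt hcomp hconv (fun x => -x.2)
    (by intro a b x y; simp; ring) (by continuity) (r := -(n:ℝ))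
    (by obtain ⟨x, hx, hx2⟩ := habN; exact ⟨x, hx, by simp; linarith⟩)
  obtain ⟨pw, hpwD, hpwEq⟩ := hv ew hewE
  -- coordinates
  have hea1v : ea.1 = (pa.1 : ℝ) := by rw [hpaEq]; rfl
  have hea2v : ea.2 = (pa.2 : ℝ) := by rw [hpaEq]; rfl
  have heu2v : eu.2 = (pu.2 : ℝ) := by rw [hpuEq]; rfl
  have hew2v : ew.2 = (pw.2 : ℝ) := by rw [hpwEq]; rfl
  have hpa1 : (pa.1 : ℝ) < 0 := by rw [← hea1v]; exact hea1
  have hpa1' : pa.1 < 0 := by exact_mod_cast hpa1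
  -- pu.2 ≤ -n
  have hpu2 : pu.2 ≤ -(n:ℤ) := by
    obtain ⟨k, hk⟩ := hpuD
    have : (pu.2 : ℝ) < 0 := by rw [← heu2v]; exact heu2
    have h2 : pu.2 < 0 := by exact_mod_cast this
    have hk1 : k ≤ -1 := by nlinarith
    nlinarith
  -- pw.2 ≥ 2n
  have hpw2 : 2 * (n:ℤ) ≤ pw.2 := by
    obtain ⟨k, hk⟩ := hpwD
    have : (n:ℝ) < (pw.2 : ℝ) := by
      have h' : -ew.2 < -(n:ℝ) := hew2'
      rw [hew2v] at h'
      linarith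
    have h2 : (n:ℤ) < pw.2 := by exact_mod_cast this
    have hk1 : 2 ≤ k := by nlinarith
    nlinarith
  -- case analysis on pa.2
  have hcases : pa.2 ≤ -(n:ℤ) ∨ pa.2 = 0 ∨ pa.2 = (n:ℤ) ∨ 2 * (n:ℤ) ≤ pa.2 := by
    obtain ⟨k, hk⟩ := hpaD
    rcases lt_trichotomy k 0 with h | h | h
    · left; nlinarith
    · right; left; simp [hk, h]
    · by_cases hk1 : k = 1
      · right; right; left; simp [hk, hk1]
      · have : 2 ≤ k := by omega
        right; right; right; nlinarith
  rcases hcases with hcase | hcase | hcase | hcase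
  · -- pa.2 ≤ -n : produce (0,0) ∈ P
    have hea2 : ea.2 ≤ -(n:ℝ) := by
      rw [hea2v]
      have : (pa.2 : ℝ) ≤ -(n:ℤ) := by exact_mod_cast hcase
      push_cast at this ⊢; linarith
    have hew2 : 2 * (n:ℝ) ≤ ew.2 := by
      rw [hew2v]
      exact_mod_cast hpw2
    obtain ⟨t, ht0, ht1, hzP⟩ := cross_snd hconv (hextP heaE) (hextP hewE)
      (h := 0) (by linarith) (by linarith) (by linarith)
    have hz := hA _ hzP rfl
    have hz1 : (0:ℝ) ≤ (1 - t) * ea.1 + t * ew.1 := hz.1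
    obtain ⟨s, hs0, hs1', hyP⟩ := cross_fst hconv (hextP heaE) hzP
      (h := 0) hea1.le hz1 (lt_of_lt_of_le hea1 hz1)
    have hyP' : ((0:ℝ), (1 - s) * ea.2) ∈ P := by
      have : (1 - s) * ea.2 + s * ((1 - t) * ea.1 + t * ew.1, (0:ℝ)).2 = (1 - s) * ea.2 := by
        simp
      rwa [this] at hyP
    have hy0 : (1 - s) * ea.2 = 0 := by
      have hle : (1 - s) * ea.2 ≤ 0 := by nlinarith
      have hge : (0:ℝ) ≤ (1 - s) * ea.2 := (hC _ hyP' rfl).1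
      linarith
    have h00 : ((0:ℝ), (1 - s) * ea.2) ∈ P := hyP'
    rw [hy0] at h00
    exact hfree 0 0 (by simpa [intPt] using h00)
  · -- pa.2 = 0
    have : ea.2 = 0 := by rw [hea2v, hcase]; simp
    have := (hA ea (hextP heaE) this).1
    linarith
  · -- pa.2 = n
    have : ea.2 = (n:ℝ) := by rw [hea2v, hcase]; simp
    have := (hB ea (hextP heaE) this).1
    linarith
  · -- 2n ≤ pa.2 : produce (0,n) ∈ P
    have hea2 : 2 * (n:ℝ) ≤ ea.2 := by
      rw [hea2v]; exact_mod_cast hcase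
    have heu2' : eu.2 ≤ -(n:ℝ) := by
      rw [heu2v]
      have : (pu.2 : ℝ) ≤ ((-(n:ℤ) : ℤ) : ℝ) := by exact_mod_cast hpu2
      push_cast at this; linarith
    obtain ⟨t, ht0, ht1, hzP⟩ := cross_snd hconv (hextP heuE) (hextP heaE)
      (h := (n:ℝ)) (by linarith) (by linarith) (by linarith)
    have hz := hB _ hzP rfl
    have hz1 : (0:ℝ) ≤ (1 - t) * eu.1 + t * ea.1 := hz.1
    obtain ⟨s, hs0, hs1', hyP⟩ := cross_fst hconv (hextP heaE) hzP
      (h := 0) hea1.le hz1 (lt_of_lt_of_le hea1 hz1)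
    have hyP' : ((0:ℝ), (1 - s) * ea.2 + s * (n:ℝ)) ∈ P := hyP
    have hyn : (1 - s) * ea.2 + s * (n:ℝ) = (n:ℝ) := by
      have hge : (n:ℝ) ≤ (1 - s) * ea.2 + s * (n:ℝ) := by nlinarith
      have hle : (1 - s) * ea.2 + s * (n:ℝ) ≤ (n:ℝ) := (hC _ hyP' rfl).2
      linarith
    have h0n : ((0:ℝ), (1 - s) * ea.2 + s * (n:ℝ)) ∈ P := hyP'
    rw [hyn] at h0n
    exact hfree 0 1 (by simpa [intPt] using h0n)

set_option maxHeartbeats 2000000 in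
lemma core_fst (n : ℕ) (hn : 3 ≤ n) (P : Set (ℝ × ℝ)) (hP : TypeII n P)
    (hv : ∀ x ∈ extremePoints ℝ P, ∃ p : ℤ × ℤ, (n : ℤ) ∣ p.1 ∧ x = intPt p) : False := by
  obtain ⟨⟨V, hPV, -⟩, hfree, hs1, hs2, hs3, hs4⟩ := hP
  have hnz : (3:ℤ) ≤ (n:ℤ) := by exact_mod_cast hn
  have hN : (0:ℝ) < (n:ℝ) := by
    have : 0 < n := by omega
    exact_mod_cast this
  have hconv : Convex ℝ P := hPV ▸ convex_convexHull ℝ _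
  have hcomp : IsCompact P := by
    rw [hPV]; exact (Set.Finite.image _ V.finite_toSet).isCompact_convexHull ℝ
  obtain ⟨hA, hbel0, -⟩ := seg_horiz hN hs1
  obtain ⟨hC, hleft, -⟩ := seg_vert hN hs4
  obtain ⟨hD, -, hrightN⟩ := seg_vert hN hs2
  have hextP : extremePoints ℝ P ⊆ P := extremePoints_subset
  obtain ⟨ec, hecE, hec2⟩ := exists_extreme_lt hcomp hconv (fun x => x.2)
    (by intro a b x y; simp) continuous_snd hbel0
  obtain ⟨pc, hpcD, hpcEq⟩ := hv ec hecE
  obtain ⟨el, helE, hel1⟩ := exists_extreme_lt hcomp hconv (fun x => x.1)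
    (by intro a b x y; simp) continuous_fst hleft
  obtain ⟨pl, hplD, hplEq⟩ := hv el helE
  obtain ⟨er, herE, her1'⟩ := exists_extreme_lt hcomp hconv (fun x => -x.1)
    (by intro a b x y; simp; ring) (by continuity) (r := -(n:ℝ))
    (by obtain ⟨x, hx, hx1⟩ := hrightN; exact ⟨x, hx, by simp; linarith⟩)
  obtain ⟨pr, hprD, hprEq⟩ := hv er herE
  have hec1v : ec.1 = (pc.1 : ℝ) := by rw [hpcEq]; rfl
  have hec2v : ec.2 = (pc.2 : ℝ) := by rw [hpcEq]; rfl
  have hel1v : el.1 = (pl.1 : ℝ) := by rw [hplEq]; rfl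
  have her1v : er.1 = (pr.1 : ℝ) := by rw [hprEq]; rfl
  have hpl1 : pl.1 ≤ -(n:ℤ) := by
    obtain ⟨k, hk⟩ := hplD
    have : (pl.1 : ℝ) < 0 := by rw [← hel1v]; exact hel1
    have h2 : pl.1 < 0 := by exact_mod_cast this
    have hk1 : k ≤ -1 := by nlinarith
    nlinarith
  have hpr1 : 2 * (n:ℤ) ≤ pr.1 := by
    obtain ⟨k, hk⟩ := hprD
    have : (n:ℝ) < (pr.1 : ℝ) := by
      have h' : -er.1 < -(n:ℝ) := her1'
      rw [her1v] at h'
      linarith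
    have h2 : (n:ℤ) < pr.1 := by exact_mod_cast this
    have hk1 : 2 ≤ k := by nlinarith
    nlinarith
  have hcases : pc.1 ≤ -(n:ℤ) ∨ pc.1 = 0 ∨ pc.1 = (n:ℤ) ∨ 2 * (n:ℤ) ≤ pc.1 := by
    obtain ⟨k, hk⟩ := hpcD
    rcases lt_trichotomy k 0 with h | h | h
    · left; nlinarith
    · right; left; simp [hk, h]
    · by_cases hk1 : k = 1
      · right; right; left; simp [hk, hk1]
      · have : 2 ≤ k := by omega
        right; right; right; nlinarith
  rcases hcases with hcase | hcase | hcase | hcase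
  · -- pc.1 ≤ -n : produce (0,0) ∈ P
    have hec1 : ec.1 ≤ -(n:ℝ) := by
      rw [hec1v]
      have : (pc.1 : ℝ) ≤ ((-(n:ℤ) : ℤ) : ℝ) := by exact_mod_cast hcase
      push_cast at this; linarith
    have her1 : 2 * (n:ℝ) ≤ er.1 := by
      rw [her1v]; exact_mod_cast hpr1
    obtain ⟨t, ht0, ht1, hzP⟩ := cross_fst hconv (hextP hecE) (hextP herE)
      (h := 0) (by linarith) (by linarith) (by linarith)
    have hz := hC _ hzP rfl
    have hz2 : (0:ℝ) ≤ (1 - t) * ec.2 + t * er.2 := hz.1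
    obtain ⟨s, hs0, hs1'', hyP⟩ := cross_snd hconv (hextP hecE) hzP
      (h := 0) hec2.le hz2 (lt_of_lt_of_le hec2 hz2)
    have hyP' : ((1 - s) * ec.1, (0:ℝ)) ∈ P := by
      have heq : (1 - s) * ec.1 + s * ((0:ℝ), (1 - t) * ec.2 + t * er.2).1
          = (1 - s) * ec.1 := by simp
      rwa [heq] at hyP
    have hy0 : (1 - s) * ec.1 = 0 := by
      have hle : (1 - s) * ec.1 ≤ 0 := by nlinarith
      have hge : (0:ℝ) ≤ (1 - s) * ec.1 := (hA _ hyP' rfl).1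
      linarith
    have h00 : ((1 - s) * ec.1, (0:ℝ)) ∈ P := hyP'
    rw [hy0] at h00
    exact hfree 0 0 (by simpa [intPt] using h00)
  · -- pc.1 = 0
    have : ec.1 = 0 := by rw [hec1v, hcase]; simp
    have := (hC ec (hextP hecE) this).1
    linarith
  · -- pc.1 = n
    have : ec.1 = (n:ℝ) := by rw [hec1v, hcase]; simp
    have := (hD ec (hextP hecE) this).1
    linarith
  · -- 2n ≤ pc.1 : produce (n,0) ∈ P
    have hec1 : 2 * (n:ℝ) ≤ ec.1 := by
      rw [hec1v]; exact_mod_cast hcase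
    have hel1' : el.1 ≤ -(n:ℝ) := by
      rw [hel1v]
      have : (pl.1 : ℝ) ≤ ((-(n:ℤ) : ℤ) : ℝ) := by exact_mod_cast hpl1
      push_cast at this; linarith
    obtain ⟨t, ht0, ht1, hzP⟩ := cross_fst hconv (hextP helE) (hextP hecE)
      (h := (n:ℝ)) (by linarith) (by linarith) (by linarith)
    have hz := hD _ hzP rfl
    have hz2 : (0:ℝ) ≤ (1 - t) * el.2 + t * ec.2 := hz.1
    obtain ⟨s, hs0, hs1'', hyP⟩ := cross_snd hconv (hextP hecE) hzP
      (h := 0) hec2.le hz2 (lt_of_lt_of_le hec2 hz2)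
    have hyP' : ((1 - s) * ec.1 + s * (n:ℝ), (0:ℝ)) ∈ P := hyP
    have hyn : (1 - s) * ec.1 + s * (n:ℝ) = (n:ℝ) := by
      have hge : (n:ℝ) ≤ (1 - s) * ec.1 + s * (n:ℝ) := by nlinarith
      have hle : (1 - s) * ec.1 + s * (n:ℝ) ≤ (n:ℝ) := (hA _ hyP' rfl).2
      linarith
    have hn0 : ((1 - s) * ec.1 + s * (n:ℝ), (0:ℝ)) ∈ P := hyP'
    rw [hyn] at hn0
    exact hfree 1 0 (by simpa [intPt] using hn0)

lemma div_snd_of_mem {Γ : AddSubgroup (ℤ × ℤ)} {n : ℕ} (hfac : HasInvFactors Γ 1 n)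
    (h10 : ((1:ℤ), (0:ℤ)) ∈ Γ) : ∀ p ∈ Γ, (n:ℤ) ∣ p.2 := by
  obtain ⟨a, b, c, d, hdet, hmem, hδ, hneq⟩ := hfac
  obtain ⟨u, v, huv⟩ := (hmem (1, 0)).1 h10
  rw [Prod.mk.injEq] at huv
  obtain ⟨h1, h2⟩ := huv
  have hd : d = u * (a * d - b * c) := by linear_combination d * h1 - b * h2
  have hc : c = -v * (a * d - b * c) := by linear_combination c * h1 - a * h2
  have hN : (n:ℤ) = ((a * d - b * c).natAbs : ℤ) := by
    rw [hneq]; simp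
  have hdvdDet : (n:ℤ) ∣ (a * d - b * c) := by
    rw [hN]; exact Int.natAbs_dvd.mpr dvd_rfl
  have hdvdd : (n:ℤ) ∣ d := hd ▸ Dvd.dvd.mul_left hdvdDet u
  have hdvdc : (n:ℤ) ∣ c := hc ▸ Dvd.dvd.mul_left hdvdDet (-v)
  intro p hp
  obtain ⟨u', v', hp'⟩ := (hmem p).1 hp
  rw [hp']
  exact dvd_add (Dvd.dvd.mul_right hdvdc u') (Dvd.dvd.mul_right hdvdd v')

lemma div_fst_of_mem {Γ : AddSubgroup (ℤ × ℤ)} {n : ℕ} (hfac : HasInvFactors Γ 1 n)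
    (h01 : ((0:ℤ), (1:ℤ)) ∈ Γ) : ∀ p ∈ Γ, (n:ℤ) ∣ p.1 := by
  obtain ⟨a, b, c, d, hdet, hmem, hδ, hneq⟩ := hfac
  obtain ⟨u, v, huv⟩ := (hmem (0, 1)).1 h01
  rw [Prod.mk.injEq] at huv
  obtain ⟨h1, h2⟩ := huv
  have ha : a = v * (a * d - b * c) := by linear_combination a * h2 - c * h1
  have hb : b = -u * (a * d - b * c) := by linear_combination b * h2 - d * h1
  have hN : (n:ℤ) = ((a * d - b * c).natAbs : ℤ) := by
    rw [hneq]; simp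
  have hdvdDet : (n:ℤ) ∣ (a * d - b * c) := by
    rw [hN]; exact Int.natAbs_dvd.mpr dvd_rfl
  have hdvda : (n:ℤ) ∣ a := ha ▸ Dvd.dvd.mul_left hdvdDet v
  have hdvdb : (n:ℤ) ∣ b := hb ▸ Dvd.dvd.mul_left hdvdDet (-u)
  intro p hp
  obtain ⟨u', v', hp'⟩ := (hmem p).1 hp
  rw [hp']
  exact dvd_add (Dvd.dvd.mul_right hdvda u') (Dvd.dvd.mul_right hdvdb v')

/-- Lemma: if `P` is a type II_n polygon (`n ≥ 3`) whose vertices belong to a sublattice `Γ`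
of `ℤ²` with invariant factor sequence `(1, n)`, then the large `e₁`-step `S₁` and the large
`e₂`-step `S₂` of `Γ` are both at least 2. -/
theorem stmt13 (n : ℕ) (hn : 3 ≤ n) (P : Set (ℝ × ℝ)) (hP : TypeII n P)
    (Γ : AddSubgroup (ℤ × ℤ)) (hΓ : IsSublatticeZ2 Γ) (hfac : HasInvFactors Γ 1 n)
    (hvert : VerticesIn P Γ)
    (S₁ S₂ : ℕ)
    (hS₁ : 0 < S₁ ∧ ∀ u : ℤ, (u, (0 : ℤ)) ∈ Γ ↔ (S₁ : ℤ) ∣ u)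
    (hS₂ : 0 < S₂ ∧ ∀ u : ℤ, ((0 : ℤ), u) ∈ Γ ↔ (S₂ : ℤ) ∣ u) :
    2 ≤ S₁ ∧ 2 ≤ S₂ := by
  constructor
  · by_contra hcon
    have hS1 : S₁ = 1 := by omega
    have h10 : ((1:ℤ), (0:ℤ)) ∈ Γ := by
      rw [hS₁.2 1, hS1]
      simp
    have hdiv := div_snd_of_mem hfac h10
    exact core_snd n hn P hP (fun x hx => by
      obtain ⟨p, hpΓ, hxp⟩ := hvert x hx
      exact ⟨p, hdiv p hpΓ, hxp⟩)
  · by_contra hcon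
    have hS2 : S₂ = 1 := by omega
    have h01 : ((0:ℤ), (1:ℤ)) ∈ Γ := by
      rw [hS₂.2 1, hS2]
      simp
    have hdiv := div_fst_of_mem hfac h01
    exact core_fst n hn P hP (fun x hx => by
      obtain ⟨p, hpΓ, hxp⟩ := hvert x hx
      exact ⟨p, hdiv p hpΓ, hxp⟩)
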